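/- Let p, q, r, ω : ℝ → ℝ be differentiable functions such that for all t: p(t)² + q(t)² + r(t)² = 1, p′(t)² + q′(t)² + r′(t)² = ω′(t)², and ω′(t) ≠ 0. Define l = p·sin ω + (p′/ω′)·cos ω, m = q·sin ω + (q′/ω′)·cos ω, n = r·sin ω + (r′/ω′)·cos ω. Then for all t: l(t)² + m(t)² + n(t)² = 1. -/

import Mathlib

open Real

theorem euler_lmn_unit
    (p q r ω : ℝ → ℝ)
    (hp : Differentiable ℝ p) (hq : Differentiable ℝ q) (hr : Differentiable ℝ r)
    (hω : Differentiable ℝ ω)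
    (hunit : ∀ t, (p t) ^ 2 + (q t) ^ 2 + (r t) ^ 2 = 1)
    (hspeed : ∀ t, (deriv p t) ^ 2 + (deriv q t) ^ 2 + (deriv r t) ^ 2 = (deriv ω t) ^ 2)
    (hω' : ∀ t, deriv ω t ≠ 0)
    (l m n : ℝ → ℝ)
    (hl : ∀ t, l t = p t * sin (ω t) + (deriv p t / deriv ω t) * cos (ω t))
    (hm : ∀ t, m t = q t * sin (ω t) + (deriv q t / deriv ω t) * cos (ω t))
    (hn : ∀ t, n t = r t * sin (ω t) + (deriv r t / deriv ω t) * cos (ω t)) :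
    ∀ t : ℝ, (l t) ^ 2 + (m t) ^ 2 + (n t) ^ 2 = 1 := by
  intro t
  have horth : p t * deriv p t + q t * deriv q t + r t * deriv r t = 0 := by
    have hfun : (fun s => (p s) ^ 2 + (q s) ^ 2 + (r s) ^ 2) = fun _ => (1 : ℝ) := by
      funext s; exact hunit s
    have hd : deriv (fun s => (p s) ^ 2 + (q s) ^ 2 + (r s) ^ 2) t = 0 := by
      rw [hfun]; simp
    have : deriv (fun s => (p s) ^ 2 + (q s) ^ 2 + (r s) ^ 2) t
        = 2 * p t * deriv p t + 2 * q t * deriv q t + 2 * r t * deriv r t := by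
      rw [deriv_fun_add (DifferentiableAt.fun_add ((hp t).fun_pow 2) ((hq t).fun_pow 2)) ((hr t).fun_pow 2),
        deriv_fun_add ((hp t).fun_pow 2) ((hq t).fun_pow 2), deriv_fun_pow (hp t) 2,
        deriv_fun_pow (hq t) 2, deriv_fun_pow (hr t) 2]
      ring
    nlinarith [hd, this]
  have hw := hω' t
  have hs := hspeed t
  have hu := hunit t
  rw [hl t, hm t, hn t]
  have hpy := sin_sq_add_cos_sq (ω t)
  field_simp
  linear_combination (sin (ω t))^2 * (deriv ω t)^2 * hu + (cos (ω t))^2 * hs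
    + 2 * sin (ω t) * cos (ω t) * deriv ω t * horth + (deriv ω t)^2 * hpy
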